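/- Let Ω ⊂ ℝ^N bounded, and suppose N(v) ≥ R^γ on Ω_{2R} for some γ > 0, 0 < R ≤ 1, and |b|² satisfies sup_t ‖|b|²‖_{L^{p₀}(Ω)} ≤ K for some p₀ > N/2. Then for a cutoff η with |Dη| ≤ 1/R supported in Ω_{2R}: ∫_Ω |b| |Dη| / N(v) dx ≤ C(K,N) R^{N-2+γ₀/2-γ}, where γ₀ = N(1 - 1/p₀) - (N-2) > 0. Consequently, choosing 0 < γ < γ₀/2, the bound ∫_Ω |b||Dη|/N(v) ≤ C R^{N-2} holds. -/

import Mathlib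

open MeasureTheory Set Metric

set_option maxHeartbeats 1000000

/-- Estimate (3.17)–(3.18): with `p₀ > N/2`, `γ₀ = N(1-1/p₀) - (N-2) > 0`, and
`sup` of `‖|b|²‖_{L^{p₀}(Ω)}` bounded by `K`, for a cutoff `η` with
`|Dη| ≤ 1/R` supported in `Ω_{2R}` and `N(v) ≥ R^γ` on `Ω_{2R}`, one has
`∫_Ω |b||Dη|/N(v) ≤ C(K,N) R^{N-2+γ₀/2-γ}`; consequently, if `γ < γ₀/2`, the
bound `∫_Ω |b||Dη|/N(v) ≤ C R^{N-2}` holds. -/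
theorem stmt_17 {N : ℕ} (hN : 2 ≤ N) (p₀ K : ℝ) (hp₀ : (N : ℝ) / 2 < p₀)
    (hK : 0 ≤ K) :
    (0 : ℝ) < (N : ℝ) * (1 - 1 / p₀) - ((N : ℝ) - 2) ∧
    ∃ C : ℝ, 0 < C ∧
      ∀ (Ω : Set (EuclideanSpace ℝ (Fin N))), MeasurableSet Ω →
        Bornology.IsBounded Ω →
        ∀ (R γ : ℝ), 0 < R → R ≤ 1 → 0 < γ →
        ∀ (b Nv η Dη : EuclideanSpace ℝ (Fin N) → ℝ),
          Measurable b → Measurable Nv → Measurable Dη →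
          (∀ x, 0 ≤ Nv x) →
          (∀ x ∈ Ω ∩ ball (0 : EuclideanSpace ℝ (Fin N)) (2 * R), R ^ γ ≤ Nv x) →
          (∀ x, |Dη x| ≤ 1 / R) →
          (∀ x, x ∉ Ω ∩ ball (0 : EuclideanSpace ℝ (Fin N)) (2 * R) → Dη x = 0) →
          eLpNorm (fun x => |b x| ^ 2) (ENNReal.ofReal p₀) (volume.restrict Ω) ≤
            ENNReal.ofReal K →
          (∫⁻ x in Ω, ENNReal.ofReal (|b x| * |Dη x| / Nv x) ≤
            ENNReal.ofReal (C * R ^ ((N : ℝ) - 2 +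
              ((N : ℝ) * (1 - 1 / p₀) - ((N : ℝ) - 2)) / 2 - γ))) ∧
          (γ < ((N : ℝ) * (1 - 1 / p₀) - ((N : ℝ) - 2)) / 2 →
            ∫⁻ x in Ω, ENNReal.ofReal (|b x| * |Dη x| / Nv x) ≤
              ENNReal.ofReal (C * R ^ ((N : ℝ) - 2))) := by
  have hN2 : (2 : ℝ) ≤ (N : ℝ) := by exact_mod_cast hN
  haveI : Nontrivial (EuclideanSpace ℝ (Fin N)) :=
    Module.nontrivial_of_finrank_pos (R := ℝ)
      (by rw [finrank_euclideanSpace_fin]; omega)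
  have hp1 : (1 : ℝ) < p₀ := lt_of_le_of_lt (by linarith) hp₀
  have hp0pos : (0 : ℝ) < p₀ := by linarith
  have hγ₀key : (N : ℝ) * (1 - 1 / p₀) - ((N : ℝ) - 2) = 2 - (N : ℝ) / p₀ := by
    field_simp
    ring
  have hNp : (N : ℝ) / p₀ < 2 := by
    rw [div_lt_iff₀ hp0pos]
    linarith [(div_lt_iff₀ (by norm_num : (0:ℝ) < 2)).1 hp₀]
  have hγ₀ : (0 : ℝ) < (N : ℝ) * (1 - 1 / p₀) - ((N : ℝ) - 2) := by
    rw [hγ₀key]; linarith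
  refine ⟨hγ₀, ?_⟩
  -- conjugate exponent for 2p₀
  have h2p1 : (1 : ℝ) < 2 * p₀ := by linarith
  set q : ℝ := Real.conjExponent (2 * p₀) with hqdef
  have hq : (2 * p₀).HolderConjugate q := Real.HolderConjugate.conjExponent h2p1
  have hqinv : 1 / q = 1 - 1 / (2 * p₀) := by
    have := hq.inv_add_inv_eq_one
    rw [one_div, one_div]; linarith
  set e : ℝ := 1 - 1 / (2 * p₀) with hedef
  have he0 : 0 ≤ e := by
    have h : 1 / (2 * p₀) ≤ 1 := by
      rw [div_le_one (by linarith)]; linarith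
    rw [hedef]; linarith
  have heN : e ≤ (N : ℝ) := by
    have h1p : 0 < 1 / (2 * p₀) := by positivity
    simp only [hedef]; linarith
  set v₁ : ENNReal := volume (ball (0 : EuclideanSpace ℝ (Fin N)) 1) with hv₁def
  have hv₁top : v₁ ≠ ⊤ := measure_ball_lt_top.ne
  set c : ℝ := Real.sqrt K * 2 ^ ((N : ℝ) * e) * v₁.toReal ^ e with hcdef
  have hc0 : 0 ≤ c := by positivity
  refine ⟨c + 1, by positivity, ?_⟩
  intro Ω hΩmeas hΩbdd R γ hR hR1 hγ b Nv η Dη hbm hNvm hDηm hNv0 hNvge hDηle hDη0 hb2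
  set B : Set (EuclideanSpace ℝ (Fin N)) := ball (0 : EuclideanSpace ℝ (Fin N)) (2 * R)
    with hBdef
  set S : Set (EuclideanSpace ℝ (Fin N)) := Ω ∩ B with hSdef
  have hSmeas : MeasurableSet S := hΩmeas.inter measurableSet_ball
  set e₁ : ℝ := (N : ℝ) - 2 + ((N : ℝ) * (1 - 1 / p₀) - ((N : ℝ) - 2)) / 2 - γ with he₁def
  have hexp : (N : ℝ) * e - 1 - γ = e₁ := by
    simp only [he₁def, hedef]
    field_simp
    ring
  -- Main estimate
  have key : ∫⁻ x in Ω, ENNReal.ofReal (|b x| * |Dη x| / Nv x) ≤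
      ENNReal.ofReal ((c + 1) * R ^ e₁) := by
    have hRγ : (0 : ℝ) < R ^ γ := Real.rpow_pos_of_pos hR γ
    -- pointwise bound
    have hpt : ∀ x, ENNReal.ofReal (|b x| * |Dη x| / Nv x) ≤
        S.indicator (fun x => ENNReal.ofReal (R ^ (-(1 + γ)) * |b x|)) x := by
      intro x
      by_cases hx : x ∈ S
      · rw [indicator_of_mem hx]
        apply ENNReal.ofReal_le_ofReal
        have h1 : |b x| * |Dη x| / Nv x ≤ |b x| * (1 / R) / R ^ γ :=
          div_le_div₀ (by positivity)
            (mul_le_mul_of_nonneg_left (hDηle x) (abs_nonneg _)) hRγ (hNvge x hx)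
        have h2 : |b x| * (1 / R) / R ^ γ = R ^ (-(1 + γ)) * |b x| := by
          rw [Real.rpow_neg hR.le, Real.rpow_add hR, Real.rpow_one]
          field_simp
        linarith
      · rw [hDη0 x hx]
        simp
    calc ∫⁻ x in Ω, ENNReal.ofReal (|b x| * |Dη x| / Nv x)
        ≤ ∫⁻ x in Ω, S.indicator (fun x => ENNReal.ofReal (R ^ (-(1 + γ)) * |b x|)) x :=
          lintegral_mono hpt
      _ = ∫⁻ x in S, ENNReal.ofReal (R ^ (-(1 + γ)) * |b x|) := by
          rw [lintegral_indicator hSmeas, Measure.restrict_restrict hSmeas,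
            inter_eq_left.2 inter_subset_left]
      _ = ENNReal.ofReal (R ^ (-(1 + γ))) * ∫⁻ x in S, ENNReal.ofReal |b x| := by
          simp_rw [ENNReal.ofReal_mul (Real.rpow_nonneg hR.le _)]
          exact lintegral_const_mul _ hbm.abs.ennreal_ofReal
      _ ≤ ENNReal.ofReal (R ^ (-(1 + γ))) *
            (ENNReal.ofReal (Real.sqrt K) *
              (ENNReal.ofReal (((2 * R) ^ N : ℝ) ^ (1 / q)) *
                ENNReal.ofReal (v₁.toReal ^ (1 / q)))) := by
          gcongr
          -- Hölder step
          have hholder : ∫⁻ x in S, ENNReal.ofReal |b x| ≤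
              (∫⁻ x in S, ENNReal.ofReal (|b x|) ^ (2 * p₀)) ^ (1 / (2 * p₀)) *
                (volume S) ^ (1 / q) := by
            have := ENNReal.lintegral_mul_le_Lp_mul_Lq (volume.restrict S) hq
              (f := fun x => ENNReal.ofReal (|b x|)) (g := fun _ => 1)
              hbm.abs.ennreal_ofReal.aemeasurable aemeasurable_const
            simpa using this
          refine hholder.trans ?_
          gcongr ?_ * ?_
          · -- Lᵖ factor via hypothesis hb2
            have hint : ∫⁻ x in S, ENNReal.ofReal (|b x|) ^ (2 * p₀) ≤
                ∫⁻ x in Ω, ENNReal.ofReal (|b x|) ^ (2 * p₀) :=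
              lintegral_mono' (Measure.restrict_mono inter_subset_left le_rfl) le_rfl
            have heq : eLpNorm (fun x => |b x| ^ 2) (ENNReal.ofReal p₀) (volume.restrict Ω) =
                (∫⁻ x in Ω, ENNReal.ofReal (|b x|) ^ (2 * p₀)) ^ (1 / p₀) := by
              rw [eLpNorm_eq_lintegral_rpow_enorm_toReal
                (by simp [ENNReal.ofReal_eq_zero]; linarith) ENNReal.ofReal_ne_top,
                ENNReal.toReal_ofReal hp0pos.le]
              congr 1
              apply lintegral_congr
              intro x
              rw [← Real.enorm_eq_ofReal (abs_nonneg _)]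
              rw [show ((2 : ℝ) * p₀) = (2 : ℕ) * p₀ by norm_num, ENNReal.rpow_mul,
                ENNReal.rpow_natCast]
              rw [enorm_pow]
            have hfin : (∫⁻ x in Ω, ENNReal.ofReal (|b x|) ^ (2 * p₀)) ^ (1 / p₀) ≤
                ENNReal.ofReal K := heq ▸ hb2
            calc (∫⁻ x in S, ENNReal.ofReal (|b x|) ^ (2 * p₀)) ^ (1 / (2 * p₀))
                ≤ (∫⁻ x in Ω, ENNReal.ofReal (|b x|) ^ (2 * p₀)) ^ (1 / (2 * p₀)) :=
                  ENNReal.rpow_le_rpow hint (by positivity)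
              _ = ((∫⁻ x in Ω, ENNReal.ofReal (|b x|) ^ (2 * p₀)) ^ (1 / p₀)) ^ (2⁻¹ : ℝ) := by
                  rw [← ENNReal.rpow_mul]
                  congr 1
                  field_simp
              _ ≤ (ENNReal.ofReal K) ^ (2⁻¹ : ℝ) := ENNReal.rpow_le_rpow hfin (by norm_num)
              _ = ENNReal.ofReal (Real.sqrt K) := by
                  rw [Real.sqrt_eq_rpow, ← ENNReal.ofReal_rpow_of_nonneg hK (by norm_num)]
                  norm_num
          · -- measure factor
            have hvol : volume S ≤ ENNReal.ofReal ((2 * R) ^ N) * v₁ := by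
              calc volume S ≤ volume B := measure_mono inter_subset_right
                _ = ENNReal.ofReal ((2 * R) ^ N) * v₁ := by
                    rw [hBdef, hv₁def, Measure.addHaar_ball _ _ (by positivity : (0:ℝ) ≤ 2 * R),
                      finrank_euclideanSpace_fin]
            calc (volume S) ^ (1 / q)
                ≤ (ENNReal.ofReal ((2 * R) ^ N) * v₁) ^ (1 / q) :=
                  ENNReal.rpow_le_rpow hvol hq.symm.one_div_nonneg
              _ = ENNReal.ofReal (((2 * R) ^ N : ℝ) ^ (1 / q)) *
                    ENNReal.ofReal (v₁.toReal ^ (1 / q)) := by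
                  have hv₁r : v₁ ^ (1 / q) = ENNReal.ofReal (v₁.toReal ^ (1 / q)) := by
                    rw [← ENNReal.ofReal_rpow_of_nonneg ENNReal.toReal_nonneg
                      hq.symm.one_div_nonneg, ENNReal.ofReal_toReal hv₁top]
                  rw [ENNReal.mul_rpow_of_nonneg _ _ hq.symm.one_div_nonneg,
                    ENNReal.ofReal_rpow_of_nonneg (by positivity) hq.symm.one_div_nonneg,
                    hv₁r]
      _ ≤ ENNReal.ofReal ((c + 1) * R ^ e₁) := by
          rw [← ENNReal.ofReal_mul (by positivity), ← ENNReal.ofReal_mul (by positivity),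
            ← ENNReal.ofReal_mul (by positivity)]
          apply ENNReal.ofReal_le_ofReal
          have h2R : ((2 * R) ^ N : ℝ) ^ (1 / q) = 2 ^ ((N : ℝ) * e) * R ^ ((N : ℝ) * e) := by
            rw [← Real.rpow_natCast (2 * R) N, ← Real.rpow_mul (by positivity),
              Real.mul_rpow (by norm_num) hR.le, hqinv]
          rw [h2R]
          have hRe : R ^ (-(1 + γ)) * R ^ ((N : ℝ) * e) = R ^ e₁ := by
            rw [← Real.rpow_add hR, ← hexp]
            ring_nf
          calc R ^ (-(1 + γ)) *
                (Real.sqrt K * (2 ^ ((N : ℝ) * e) * R ^ ((N : ℝ) * e) * v₁.toReal ^ (1 / q)))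
              = (Real.sqrt K * 2 ^ ((N : ℝ) * e) * v₁.toReal ^ e) *
                  (R ^ (-(1 + γ)) * R ^ ((N : ℝ) * e)) := by rw [hqinv]; ring
            _ = c * R ^ e₁ := by rw [hRe, hcdef]
            _ ≤ (c + 1) * R ^ e₁ := by
                have : (0:ℝ) ≤ R ^ e₁ := Real.rpow_nonneg hR.le _
                nlinarith
  refine ⟨key, fun hγsmall => key.trans ?_⟩
  apply ENNReal.ofReal_le_ofReal
  have hle : R ^ e₁ ≤ R ^ ((N : ℝ) - 2) := by
    apply Real.rpow_le_rpow_of_exponent_ge hR hR1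
    simp only [he₁def]
    linarith
  nlinarith [Real.rpow_nonneg hR.le e₁]
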